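/- Obligation is stricter than permission (positive action): for every action a ∈ Σ and party p, the clause 𝒪_p(a) is stricter than the clause 𝒫_p(a), i.e., 𝒫_p(a) ⊑ 𝒪_p(a): for every pair of contract automata (𝒜, 𝒜') related by [𝒫_p(a) → 𝒪_p(a)], one has 𝒜 ⊑ 𝒜'. -/
import Mathlib


namespace TwoParty

/-- Parties: `true` is party 1, `false` is party 2; `!p` is the other party `p̄`. -/
abbrev Party := Bool

/-- The extended alphabet `Σ!`: an action `a` of `Σ` or its absence `!a`. -/
inductive ExtAct (Act : Type) : Type
  | pos (a : Act)
  | neg (a : Act)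

/-- The involution `!` on extended actions, with `!(!a) = a`. -/
def negExt {Act : Type} : ExtAct Act → ExtAct Act
  | .pos a => .neg a
  | .neg a => .pos a

/-- Contract clauses over `Act`: obligations `𝒪_p(x)` and permissions `𝒫_p(x)`. -/
inductive Clause (Act : Type) : Type
  | obl (p : Party) (x : ExtAct Act)
  | perm (p : Party) (x : ExtAct Act)

/-- Syntactic negation of clauses:
`!𝒫_p(a) = 𝒪_p(!a)`, `!𝒫_p(!a) = 𝒪_p(a)`, `!𝒪_p(a) = 𝒫_p(!a)`, `!𝒪_p(!a) = 𝒫_p(a)`. -/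
def negClause {Act : Type} : Clause Act → Clause Act
  | .obl p x => .perm p (negExt x)
  | .perm p x => .obl p (negExt x)

/-- A multi-action automaton over alphabet `Act` with state type `Q`:
an initial state and a transition relation labelled by action sets. -/
structure MAA (Act Q : Type) where
  init : Q
  trans : Q → Set Act → Q → Prop

/-- `acts(q)`: the action sets on the outgoing transitions from `q`. -/
def MAA.acts {Act Q : Type} (S : MAA Act Q) (q : Q) : Set (Set Act) :=
  {A | ∃ q', S.trans q A q'}

/-- Transition relation of the synchronous composition `S1 ∥_G S2`. -/
def syncTrans {Act Q1 Q2 : Type} (S1 : MAA Act Q1) (S2 : MAA Act Q2) (G : Set Act) :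
    Q1 × Q2 → Set Act → Q1 × Q2 → Prop := fun q A q' =>
  (S1.trans q.1 A q'.1 ∧ A ∩ G = ∅ ∧ q'.2 = q.2) ∨
  (S2.trans q.2 A q'.2 ∧ A ∩ G = ∅ ∧ q'.1 = q.1) ∨
  (∃ B C, A = B ∪ C ∧ S1.trans q.1 B q'.1 ∧ S2.trans q.2 C q'.2 ∧
    B ∩ G = C ∩ G ∧ B ∩ G ≠ ∅)

/-- A contract automaton: a total, deterministic multi-action automaton together
with a set of contract clauses attached to each state. -/
structure CA (Act QA : Type) where
  init : QA
  trans : QA → Set Act → QA → Prop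
  total : ∀ q A, ∃ q', trans q A q'
  det : ∀ q A q' q'', trans q A q' → trans q A q'' → q' = q''
  contract : QA → Set (Clause Act)

/-- Structurally isomorphic contract automata: same state set, initial state and
transition relation (but possibly different contract functions). -/
def StructIso {Act QA : Type} (ca ca' : CA Act QA) : Prop :=
  ca.init = ca'.init ∧ ca.trans = ca'.trans

/-- `O_p(q)`: the actions party `p` is obliged to perform at contract state `q`. -/
def CA.oblig {Act QA : Type} (ca : CA Act QA) (p : Party) (q : QA) : Set Act :=
  {a | Clause.obl p (.pos a) ∈ ca.contract q}

/-- `F_p(q)`: the actions party `p` is obliged not to perform at contract state `q`. -/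
def CA.forb {Act QA : Type} (ca : CA Act QA) (p : Party) (q : QA) : Set Act :=
  {a | Clause.obl p (.neg a) ∈ ca.contract q}

/-- `viable_p(q, A)`: all of `p`'s obliged actions are in `A` and none of its
forbidden actions is in `A`. -/
def CA.viable {Act QA : Type} (ca : CA Act QA) (p : Party) (q : QA) (A : Set Act) : Prop :=
  ca.oblig p q ⊆ A ∧ ca.forb p q ∩ A = ∅

section Sat

variable {Act Q1 Q2 QA : Type}

/-- `acts` of party `p`'s own automaton component at a composed state. -/
def pActs (S1 : MAA Act Q1) (S2 : MAA Act Q2) (p : Party) (q : Q1 × Q2) :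
    Set (Set Act) :=
  cond p (S1.acts q.1) (S2.acts q.2)

/-- The transition is performed asynchronously by the party other than `p` alone. -/
def asyncOther (S1 : MAA Act Q1) (S2 : MAA Act Q2) (G : Set Act) (p : Party)
    (q : Q1 × Q2) (A : Set Act) (q' : Q1 × Q2) : Prop :=
  cond p (S2.trans q.2 A q'.2 ∧ A ∩ G = ∅ ∧ q'.1 = q.1)
         (S1.trans q.1 A q'.1 ∧ A ∩ G = ∅ ∧ q'.2 = q.2)

/-- Satisfaction, by party `p`, of a single permission `𝒫_{!p}(x)` of the other
party at a composed state with components `q` and contract state `qA`. -/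
def satPerm (ca : CA Act QA) (S1 : MAA Act Q1) (S2 : MAA Act Q2) (G : Set Act)
    (p : Party) (q : Q1 × Q2) (qA : QA) : ExtAct Act → Prop
  | .pos a => a ∈ G →
      ∃ A ∈ pActs S1 S2 p q, ∃ A', A' ⊆ Gᶜ ∧ a ∈ A ∧ ca.viable (!p) qA (A ∪ A')
  | .neg a => a ∈ G →
      ∃ A ∈ pActs S1 S2 p q, ∃ A', A' ⊆ Gᶜ ∧ a ∉ A ∧ ca.viable (!p) qA (A ∪ A')

/-- `sat^𝒜_p` on states: the permission part (all permissions of the other party)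
together with the obligation part (`p` offers a viable action set for `!p`). -/
def satState (ca : CA Act QA) (S1 : MAA Act Q1) (S2 : MAA Act Q2) (G : Set Act)
    (p : Party) (s : (Q1 × Q2) × QA) : Prop :=
  (∀ x, Clause.perm (!p) x ∈ ca.contract s.2 → satPerm ca S1 S2 G p s.1 s.2 x) ∧
  (∃ A ∈ pActs S1 S2 p s.1, ∃ A', A' ⊆ Gᶜ ∧ ca.viable (!p) s.2 (A ∪ A'))

/-- `sat^𝒜_p` on transitions: every transition in which `p` participates (i.e.
which is not an asynchronous move of the other party alone) must be viable for `p`. -/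
def satTrans (ca : CA Act QA) (S1 : MAA Act Q1) (S2 : MAA Act Q2) (G : Set Act)
    (p : Party) (s : (Q1 × Q2) × QA) (A : Set Act) (s' : (Q1 × Q2) × QA) : Prop :=
  ¬ asyncOther S1 S2 G p s.1 A s'.1 → ca.viable p s.2 A

/-- Transitions of the behaviour `(S1 ∥_G S2) ∥_Σ 𝒜` (the contract automaton,
being total, synchronises on every action set and merely tags the behaviour). -/
def behTrans (ca : CA Act QA) (S1 : MAA Act Q1) (S2 : MAA Act Q2) (G : Set Act)
    (s : (Q1 × Q2) × QA) (A : Set Act) (s' : (Q1 × Q2) × QA) : Prop :=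
  syncTrans S1 S2 G s.1 A s'.1 ∧ ca.trans s.2 A s'.2

/-- Reachable states of the behaviour of `⟨S1,S2⟩^𝒜_G`. -/
def behReach (ca : CA Act QA) (S1 : MAA Act Q1) (S2 : MAA Act Q2) (G : Set Act) :
    Set ((Q1 × Q2) × QA) :=
  {s | Relation.ReflTransGen (fun t t' => ∃ A, behTrans ca S1 S2 G t A t')
        ((S1.init, S2.init), ca.init) s}

/-- Reachable states of `S1 ∥_G S2`. -/
def sysReach (S1 : MAA Act Q1) (S2 : MAA Act Q2) (G : Set Act) : Set (Q1 × Q2) :=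
  {q | Relation.ReflTransGen (fun t t' => ∃ A, syncTrans S1 S2 G t A t')
        (S1.init, S2.init) q}

/-- Well-formedness: `S1 ∥_G S2` never deadlocks. -/
def WellFormed (S1 : MAA Act Q1) (S2 : MAA Act Q2) (G : Set Act) : Prop :=
  ∀ q ∈ sysReach S1 S2 G, ∃ A q', syncTrans S1 S2 G q A q'

/-- `bi_p(⟨S1,S2⟩^𝒜_G)`: party `p` is breach-incapable, i.e. `sat^𝒜_p` holds on
every reachable state and on every transition out of a reachable state. -/
def bi (ca : CA Act QA) (S1 : MAA Act Q1) (S2 : MAA Act Q2) (G : Set Act)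
    (p : Party) : Prop :=
  (∀ s ∈ behReach ca S1 S2 G, satState ca S1 S2 G p s) ∧
  (∀ s ∈ behReach ca S1 S2 G, ∀ A s', behTrans ca S1 S2 G s A s' →
      satTrans ca S1 S2 G p s A s')

end Sat

/-- `𝒜 ⊑_p 𝒜'`: for all well-formed systems, breach-incapability of `p` under `𝒜'`
implies breach-incapability of `p` under `𝒜`. -/
def caLE {Act QA QA' : Type} (p : Party) (ca : CA Act QA) (ca' : CA Act QA') : Prop :=
  ∀ (Q1 Q2 : Type) (S1 : MAA Act Q1) (S2 : MAA Act Q2) (G : Set Act),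
    WellFormed S1 S2 G → bi ca' S1 S2 G p → bi ca S1 S2 G p

/-- `(𝒜,𝒜') ∈ [C → C']`: structurally isomorphic, with the contract function of `𝒜'`
obtained from that of `𝒜` by replacing some (possibly zero) occurrences of `C` by `C'`. -/
def Replace {Act QA : Type} (C C' : Clause Act) (ca ca' : CA Act QA) : Prop :=
  StructIso ca ca' ∧
  ∀ q, ca'.contract q = ca.contract q ∨
    (C ∈ ca.contract q ∧ ca'.contract q = insert C' (ca.contract q \ {C}))

/-- Clause strictness `C ⊑ C'` (for both parties). -/
def clauseLE {Act : Type} (C C' : Clause Act) : Prop :=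
  ∀ (QA : Type) (ca ca' : CA Act QA), Replace C C' ca ca' → ∀ p : Party, caLE p ca ca'

/-- No transition label of the relation `r` contains both `a` and `b`. -/
def MutexRel {Act Q : Type} (r : Q → Set Act → Q → Prop) (a b : Act) : Prop :=
  ∀ q A q', r q A q' → ¬ (a ∈ A ∧ b ∈ A)

/-- The conflict relation `✗` on contract clauses, parametrised by a
mutual-exclusion relation `mx` on actions: the least relation closed under the
four axioms. -/
inductive Conflict {Act : Type} (mx : Act → Act → Prop) : Clause Act → Clause Act → Prop
  | perm_neg (p : Party) (x : ExtAct Act) :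
      Conflict mx (.perm p x) (negClause (.perm p x))
  | mutex_obl (p : Party) {a b : Act} (h : mx a b) :
      Conflict mx (.obl p (.pos a)) (.obl p (.pos b))
  | symm {C C' : Clause Act} (h : Conflict mx C C') : Conflict mx C' C
  | strict {C C' C'' : Clause Act} (h : Conflict mx C C') (hle : clauseLE C' C'') :
      Conflict mx C C''


/-- obligation is stricter than permission (positive action):
`𝒫_p(a) ⊑ 𝒪_p(a)`, i.e. any two contract automata related by
`[𝒫_p(a) → 𝒪_p(a)]` satisfy `𝒜 ⊑ 𝒜'`. -/
theorem obligation_stricter_than_permission_pos (Act : Type) (a : Act) (p : Party) :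
    ∀ (QA : Type) (ca ca' : CA Act QA),
      Replace (Clause.perm p (.pos a)) (Clause.obl p (.pos a)) ca ca' →
      ∀ q : Party, caLE q ca ca' := by
  intro QA ca ca' hR q Q1 Q2 S1 S2 G _hwf hbi'
  obtain ⟨⟨hinit, htrans⟩, hcon⟩ := hR
  -- forbidden sets are unchanged
  have hforb : ∀ p' s, ca'.forb p' s = ca.forb p' s := by
    intro p' s
    ext b
    simp only [CA.forb, Set.mem_setOf_eq]
    rcases hcon s with h | ⟨hmem, h⟩
    · rw [h]
    · rw [h]
      simp only [Set.mem_insert_iff, Set.mem_diff, Set.mem_singleton_iff]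
      constructor
      · rintro (h1 | ⟨h1, _⟩)
        · exact absurd h1 (by simp)
        · exact h1
      · intro h1
        exact Or.inr ⟨h1, by simp⟩
  -- obligation sets only grow
  have hoblig : ∀ p' s, ca.oblig p' s ⊆ ca'.oblig p' s := by
    intro p' s b hb
    simp only [CA.oblig, Set.mem_setOf_eq] at *
    rcases hcon s with h | ⟨hmem, h⟩
    · rw [h]; exact hb
    · rw [h]
      exact Set.mem_insert_iff.mpr (Or.inr ⟨hb, by simp⟩)
  -- viability under ca' implies viability under ca
  have hviable : ∀ p' s A, ca'.viable p' s A → ca.viable p' s A := by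
    rintro p' s A ⟨h1, h2⟩
    exact ⟨(hoblig p' s).trans h1, by rw [← hforb]; exact h2⟩
  -- the behaviours coincide
  have hbt : ∀ s A s', behTrans ca S1 S2 G s A s' ↔ behTrans ca' S1 S2 G s A s' := by
    intro s A s'
    unfold behTrans
    rw [htrans]
  have hreach : behReach ca S1 S2 G = behReach ca' S1 S2 G := by
    unfold behReach behTrans
    rw [hinit, htrans]
  obtain ⟨hS', hT'⟩ := hbi'
  constructor
  · -- states
    intro s hs
    have hs' : s ∈ behReach ca' S1 S2 G := hreach ▸ hs
    obtain ⟨hP', hO'⟩ := hS' s hs'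
    -- weakening of permission satisfaction
    have hsp : ∀ x, satPerm ca' S1 S2 G q s.1 s.2 x → satPerm ca S1 S2 G q s.1 s.2 x := by
      intro x
      cases x with
      | pos b =>
        rintro h hb
        obtain ⟨A, hA, A', h1, h2, h3⟩ := h hb
        exact ⟨A, hA, A', h1, h2, hviable _ _ _ h3⟩
      | neg b =>
        rintro h hb
        obtain ⟨A, hA, A', h1, h2, h3⟩ := h hb
        exact ⟨A, hA, A', h1, h2, hviable _ _ _ h3⟩
    constructor
    · intro x hx
      rcases hcon s.2 with heq | ⟨hmem, heq⟩
      · exact hsp x (hP' x (by rw [heq]; exact hx))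
      · by_cases hx' : Clause.perm (!q) x ∈ ca'.contract s.2
        · exact hsp x (hP' x hx')
        · -- the removed permission: perm (!q) x = perm p (pos a)
          have hEq : Clause.perm (!q) x = Clause.perm p (ExtAct.pos a) := by
            by_contra hne
            exact hx' (by
              rw [heq]
              exact Set.mem_insert_iff.mpr
                (Or.inr ⟨hx, by simpa [Set.mem_singleton_iff] using hne⟩))
          have hq : (!q : Party) = p := by injection hEq
          have hxa : x = ExtAct.pos a := by injection hEq
          subst hxa
          intro ha
          obtain ⟨A, hA, A', hA', hv'⟩ := hO'
          have haobl : a ∈ ca'.oblig (!q) s.2 := by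
            simp only [CA.oblig, Set.mem_setOf_eq, hq, heq]
            exact Set.mem_insert _ _
          have haAA' : a ∈ A ∪ A' := hv'.1 haobl
          have haA : a ∈ A := by
            rcases haAA' with h | h
            · exact h
            · exact absurd ha (hA' h)
          exact ⟨A, hA, A', hA', haA, hviable _ _ _ hv'⟩
    · obtain ⟨A, hA, A', h1, h2⟩ := hO'
      exact ⟨A, hA, A', h1, hviable _ _ _ h2⟩
  · -- transitions
    intro s hs A s' hb hna
    exact hviable _ _ _ (hT' s (hreach ▸ hs) A s' ((hbt s A s').mp hb) hna)

end TwoParty
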